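/- Let R be a computably enumerable equivalence relation on ℕ with infinitely many equivalence classes (i.e., there is a function h : ℕ → ℕ such that ¬R (h i) (h j) whenever i ≠ j). Then the following are equivalent: (i) the predicate (n,m) ↦ R n m is computable (decidable); (ii) the complement predicate (n,m) ↦ ¬R n m is computably enumerable; (iii) there exists a computable function f : ℕ → ℕ such that for all n, m: R n m if and only if f n = f m; (iv) there exist computable functions f, g : ℕ → ℕ such that for all n, m: R n m if and only if f n = f m, and f (g k) = k for all k ∈ ℕ. -/

import Mathlib

open Computable

/-- Minimization of a computable total predicate that always has a witness. -/
private theorem computable_mu {p : ℕ → ℕ → Bool}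
    (hp : Computable₂ p) (hex : ∀ a, ∃ n, p a n = true) :
    ∃ F : ℕ → ℕ, Computable F ∧ ∀ a, p a (F a) = true ∧ ∀ m < F a, p a m = false := by
  classical
  refine ⟨fun a => Nat.find (hex a), ?_, fun a => ⟨Nat.find_spec (hex a), fun m hm => ?_⟩⟩
  · have h1 : Partrec fun a => Nat.rfind fun n => (p a n : Part Bool) :=
      Partrec.rfind hp.partrec₂
    apply h1.of_eq_tot
    intro a
    refine Nat.mem_rfind.2 ?_
    constructor
    · simpa using Nat.find_spec (hex a)
    · intro m hm
      simpa using Nat.find_min (hex a) hm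
  · simpa using Nat.find_min (hex a) hm

/-- From a computable classifier `f` with infinitely many values, produce a surjective
computable classifier together with a computable section. -/
private theorem surjectivize {f : ℕ → ℕ} (hf : Computable f)
    (h : ℕ → ℕ) (hinj : ∀ i j : ℕ, i ≠ j → f (h i) ≠ f (h j)) :
    ∃ f' g : ℕ → ℕ, Computable f' ∧ Computable g ∧
      (∀ n m : ℕ, f n = f m ↔ f' n = f' m) ∧ ∀ k : ℕ, f' (g k) = k := by
  classical
  -- F n = least index with the same f-value as n
  obtain ⟨F, hFc, hFs⟩ := computable_mu (p := fun n m => decide (f m = f n))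
    (Primrec.eq.decide.to_comp.comp (hf.comp snd) (hf.comp fst))
    (fun n => ⟨n, by simp⟩)
  have hF1 : ∀ n, f (F n) = f n := fun n => of_decide_eq_true (hFs n).1
  have hFmin : ∀ n m, m < F n → f m ≠ f n := fun n m hm => of_decide_eq_false ((hFs n).2 m hm)
  have hFeq : ∀ n m, f n = f m → F n = F m := by
    intro n m hnm
    have hle : ∀ a b : ℕ, f a = f b → F b ≤ F a := by
      intro a b hab
      by_contra hlt
      push_neg at hlt
      exact hFmin b (F a) hlt ((hF1 a).trans hab)
    exact le_antisymm (hle m n hnm.symm) (hle n m hnm)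
  have hFfix : ∀ n, F (F n) = F n := fun n => hFeq (F n) n (hF1 n)
  have hkey : ∀ n m, f n = f m ↔ F n = F m := by
    intro n m
    refine ⟨hFeq n m, fun he => ?_⟩
    rw [← hF1 n, ← hF1 m, he]
  -- C n = number of F-fixed points below n
  set C : ℕ → ℕ := fun n =>
    Nat.rec (motive := fun _ => ℕ) 0 (fun y IH => bif decide (F y = y) then IH + 1 else IH) n
    with hCdef
  have hCc : Computable C := by
    have := Computable.nat_rec (f := @id ℕ) (g := fun _ : ℕ => 0)
      (h := fun (_ : ℕ) (q : ℕ × ℕ) => bif decide (F q.1 = q.1) then q.2 + 1 else q.2)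
      Computable.id (const 0)
      (Computable₂.mk (Computable.cond
        (Primrec.eq.decide.to_comp.comp (hFc.comp (fst.comp snd)) (fst.comp snd))
        (succ.comp (snd.comp snd)) (snd.comp snd)))
    exact this.of_eq fun n => rfl
  have hC0 : C 0 = 0 := rfl
  have hCs : ∀ n, C (n + 1) = if F n = n then C n + 1 else C n := by
    intro n
    simp only [hCdef]
    by_cases hfx : F n = n <;> simp [hfx]
  have hCmono : Monotone C := by
    apply monotone_nat_of_le_succ
    intro n
    rw [hCs n]
    split <;> omega
  have hCstep : ∀ n, C (n + 1) ≤ C n + 1 := by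
    intro n; rw [hCs n]; split <;> omega
  have hCfixinj : ∀ a b, F a = a → F b = b → C a = C b → a = b := by
    have key : ∀ a b, F a = a → a < b → C a < C b := by
      intro a b ha hab
      have h1 : C (a + 1) = C a + 1 := by rw [hCs a, if_pos ha]
      have h2 : C (a + 1) ≤ C b := hCmono hab
      omega
    intro a b ha hb hC
    rcases lt_trichotomy a b with hlt | he | hgt
    · exact absurd hC (key a b ha hlt).ne
    · exact he
    · exact absurd hC.symm (key b a hb hgt).ne
  -- fixed points are unbounded
  have hSinf : {a : ℕ | F a = a}.Infinite := by
    have hi : Function.Injective fun i => F (h i) := by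
      intro i j hij
      by_contra hne
      exact hinj i j hne ((hkey (h i) (h j)).2 hij)
    exact Set.infinite_of_injective_forall_mem hi (fun i => hFfix (h i))
  have hCunb : ∀ k, ∃ n, k ≤ C n := by
    intro k
    induction k with
    | zero => exact ⟨0, Nat.zero_le _⟩
    | succ k ih =>
      obtain ⟨n, hn⟩ := ih
      obtain ⟨a, ha, hna⟩ := hSinf.exists_gt n
      simp only [Set.mem_setOf_eq] at ha
      refine ⟨a + 1, ?_⟩
      have : C (a + 1) = C a + 1 := by rw [hCs a, if_pos ha]
      have := hCmono hna.le
      omega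
  -- every k is C of some fixed point
  have hsurj : ∀ k, ∃ m, F m = m ∧ C m = k := by
    intro k
    have hex' : ∃ N, k + 1 ≤ C N := hCunb (k + 1)
    have hNs : k + 1 ≤ C (Nat.find hex') := Nat.find_spec hex'
    have hNpos : Nat.find hex' ≠ 0 := by
      intro h0
      rw [h0, hC0] at hNs; omega
    obtain ⟨m, hm⟩ := Nat.exists_eq_succ_of_ne_zero hNpos
    rw [hm] at hNs
    have hmlt : ¬ k + 1 ≤ C m := Nat.find_min hex' (by rw [hm]; exact Nat.lt_succ_self m)
    rw [Nat.succ_eq_add_one] at hNs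
    have hstep := hCstep m
    have hCm : C m = k := by omega
    have hfix : F m = m := by
      by_contra hne
      rw [hCs m, if_neg hne] at hNs
      omega
    exact ⟨m, hfix, hCm⟩
  -- the new classifier and its section
  obtain ⟨g, hgc, hgs⟩ := computable_mu (p := fun k n => decide (C (F n) = k))
    (Primrec.eq.decide.to_comp.comp ((hCc.comp hFc).comp snd) fst)
    (fun k => by
      obtain ⟨m, hm1, hm2⟩ := hsurj k
      exact ⟨m, by simp [hm1, hm2]⟩)
  refine ⟨fun n => C (F n), g, hCc.comp hFc, hgc, ?_, ?_⟩
  · intro n m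
    rw [hkey n m]
    exact ⟨fun he => congrArg C he,
      fun he => hCfixinj (F n) (F m) (hFfix n) (hFfix m) he⟩
  · intro k
    exact of_decide_eq_true (hgs k).1

/-- For a computably enumerable equivalence relation `R` on `ℕ` with infinitely many
equivalence classes, the following are equivalent: (i) `R` is decidable (computable);
(ii) the complement of `R` is computably enumerable; (iii) there is a computable
`f : ℕ → ℕ` classifying `R` (i.e. `R n m ↔ f n = f m`); (iv) there are computable
`f g : ℕ → ℕ` with `R n m ↔ f n = f m` and `f (g k) = k` for all `k`. -/
theorem ceer_infinite_decidable_tfae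
    (R : ℕ → ℕ → Prop) (hR : Equivalence R)
    (hce : REPred (fun p : ℕ × ℕ => R p.1 p.2))
    (hinf : ∃ h : ℕ → ℕ, ∀ i j : ℕ, i ≠ j → ¬ R (h i) (h j)) :
    [ ComputablePred (fun p : ℕ × ℕ => R p.1 p.2),
      REPred (fun p : ℕ × ℕ => ¬ R p.1 p.2),
      (∃ f : ℕ → ℕ, Computable f ∧ ∀ n m : ℕ, R n m ↔ f n = f m),
      (∃ f g : ℕ → ℕ, Computable f ∧ Computable g ∧
        (∀ n m : ℕ, R n m ↔ f n = f m) ∧ ∀ k : ℕ, f (g k) = k) ].TFAE := by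
  obtain ⟨h, hh⟩ := hinf
  tfae_have 1 → 2
  | h1 => h1.not.to_re
  tfae_have 2 → 1
  | h2 => ComputablePred.computable_iff_re_compl_re'.2 ⟨hce, h2⟩
  tfae_have 1 → 3
  | h1 => by
    obtain ⟨D, hc⟩ := h1
    have hc2 : Computable₂ (fun n m : ℕ => @decide (R n m) (D (n, m))) :=
      Computable₂.mk (hc.of_eq (fun q => by cases q; rfl))
    obtain ⟨F, hFc, hFs⟩ := computable_mu hc2
      (fun n => ⟨n, @decide_eq_true _ (D (n, n)) (hR.refl n)⟩)
    have h1' : ∀ n, R n (F n) := fun n => @of_decide_eq_true _ (D (n, F n)) (hFs n).1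
    have hmin : ∀ n k, k < F n → ¬ R n k := fun n k hk =>
      @of_decide_eq_false _ (D (n, k)) ((hFs n).2 k hk)
    refine ⟨F, hFc, fun n m => ?_⟩
    constructor
    · intro hnm
      have hle : ∀ a b : ℕ, R a b → F b ≤ F a := by
        intro a b hab
        by_contra hlt
        push_neg at hlt
        exact hmin b (F a) hlt (hR.trans (hR.symm hab) (h1' a))
      exact le_antisymm (hle m n (hR.symm hnm)) (hle n m hnm)
    · intro hFe
      exact hR.trans (h1' n) (hR.symm (hFe ▸ h1' m))
  tfae_have 3 → 1
  | ⟨f, hfc, hf⟩ => by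
    rw [ComputablePred.computable_iff]
    exact ⟨fun q => decide (f q.1 = f q.2),
      Primrec.eq.decide.to_comp.comp (hfc.comp fst) (hfc.comp snd),
      by funext q; exact propext ((hf _ _).trans (by simp))⟩
  tfae_have 3 → 4
  | ⟨f, hfc, hf⟩ => by
    obtain ⟨f', g, hf'c, hgc, hiff, hsec⟩ := surjectivize hfc h
      (fun i j hij hfe => hh i j hij ((hf _ _).2 hfe))
    exact ⟨f', g, hf'c, hgc, fun n m => (hf n m).trans (hiff n m), hsec⟩
  tfae_have 4 → 3
  | ⟨f, g, hfc, hgc, hf, _⟩ => ⟨f, hfc, hf⟩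
  tfae_finish
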